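/- arXiv:1605.05649 — 2 statements merged into one kernel-verified Lean document; each statement's English description precedes it below -/
import Mathlib

section
/- If A = U|A| is a polar decomposition of an n×n complex matrix A and there exist k orthonormal vectors u_1,...,u_k in ℂ^n such that |A|u_i = s_i(A)u_i for all 1 ≤ i ≤ k and ∑_{i=1}^k ⟨u_i, U*Bu_i⟩ = 0, then ‖A + λB‖_(k) ≥ ‖A‖_(k) for all λ ∈ ℂ. -/
open Matrix BigOperators
open scoped ComplexOrder

noncomputable def svalues {m p : ℕ} (A : Matrix (Fin m) (Fin p) ℂ) : Fin p → ℝ :=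
  fun i => Real.sqrt
    (((Matrix.isHermitian_conjTranspose_mul_self A).eigenvalues ∘
      Tuple.sort (Matrix.isHermitian_conjTranspose_mul_self A).eigenvalues) i.rev)

noncomputable def kyFan {n : ℕ} (k : ℕ) (A : Matrix (Fin n) (Fin n) ℂ) : ℝ :=
  ∑ i ∈ Finset.univ.filter (fun i : Fin n => (i : ℕ) < k), svalues A i

def ONSys {n k : ℕ} (u : Fin k → Fin n → ℂ) : Prop :=
  ∀ i j, star (u i) ⬝ᵥ u j = if i = j then 1 else 0

namespace KF

variable {n k : ℕ}

noncomputable abbrev toE {n : ℕ} (x : Fin n → ℂ) : EuclideanSpace ℂ (Fin n) :=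
  (WithLp.equiv 2 _).symm x

lemma inner_toE {n : ℕ} (x y : Fin n → ℂ) : (inner ℂ (toE x) (toE y) : ℂ) = star x ⬝ᵥ y := by
  simp [PiLp.inner_apply, dotProduct, mul_comm]

lemma onsys_orthonormal {u : Fin k → Fin n → ℂ} (h : ONSys u) :
    Orthonormal ℂ (fun i => toE (u i)) := by
  rw [orthonormal_iff_ite]
  intro i j
  rw [inner_toE]
  exact h i j

lemma onsys_norm_eq_one {u : Fin k → Fin n → ℂ} (h : ONSys u) (i : Fin k) :
    ‖toE (u i)‖ = 1 := (onsys_orthonormal h).1 i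

lemma cs_sum {ι : Type*} [Fintype ι] (f g : ι → ℂ) :
    ‖∑ i, f i * g i‖ ≤ Real.sqrt (∑ i, ‖f i‖ ^ 2) * Real.sqrt (∑ i, ‖g i‖ ^ 2) := by
  classical
  let F : EuclideanSpace ℂ ι := (WithLp.equiv 2 _).symm (fun i => (starRingEnd ℂ) (f i))
  let G : EuclideanSpace ℂ ι := (WithLp.equiv 2 _).symm g
  have h1 : (inner ℂ F G : ℂ) = ∑ i, f i * g i := by
    simp [F, G, PiLp.inner_apply, mul_comm]
  have h2 := norm_inner_le_norm (𝕜 := ℂ) F G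
  rw [h1] at h2
  have hF : ‖F‖ = Real.sqrt (∑ i, ‖f i‖ ^ 2) := by
    rw [EuclideanSpace.norm_eq]; simp [F]
  have hG : ‖G‖ = Real.sqrt (∑ i, ‖g i‖ ^ 2) := by
    rw [EuclideanSpace.norm_eq]; simp [G]
  rw [hF, hG] at h2
  exact h2

lemma card_filter_lt {n k : ℕ} (hk : k ≤ n) :
    (Finset.univ.filter (fun i : Fin n => (i : ℕ) < k)).card = k := by
  rw [Finset.card_filter, Fin.sum_univ_eq_sum_range (fun i => if i < k then 1 else 0),
    ← Finset.sum_filter]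
  have : Finset.filter (fun a => a < k) (Finset.range n) = Finset.range k := by
    ext a; simp; omega
  simp [this]

lemma sorted_sum_le {n k : ℕ} (hk : k ≤ n) (t c : Fin n → ℝ)
    (ht : Antitone t) (ht0 : ∀ i, 0 ≤ t i)
    (hc0 : ∀ i, 0 ≤ c i) (hc1 : ∀ i, c i ≤ 1) (hcs : ∑ i, c i ≤ (k : ℝ)) :
    ∑ i, t i * c i ≤ ∑ i ∈ Finset.univ.filter (fun i : Fin n => (i : ℕ) < k), t i := by
  classical
  set S := Finset.univ.filter (fun i : Fin n => (i : ℕ) < k) with hS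
  set τ : ℝ := if h : k < n then t ⟨k, h⟩ else 0 with hτ
  have hτ0 : 0 ≤ τ := by
    rw [hτ]; split
    · exact ht0 _
    · exact le_refl 0
  have key1 : ∀ i ∈ S, τ ≤ t i := by
    intro i hi
    rw [hS, Finset.mem_filter] at hi
    rw [hτ]; split
    · exact ht (by exact Fin.mk_le_of_le_val (le_of_lt hi.2))
    · exact ht0 i
  have key2 : ∀ i ∈ Sᶜ, t i ≤ τ := by
    intro i hi
    rw [hS, Finset.mem_compl, Finset.mem_filter] at hi
    have hik : k ≤ (i : ℕ) := by
      by_contra h; exact hi ⟨Finset.mem_univ i, by omega⟩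
    have hkn : k < n := lt_of_le_of_lt hik i.isLt
    rw [hτ, dif_pos hkn]
    exact ht (by exact Fin.mk_le_of_le_val hik)
  have hsplit : ∑ i, t i * c i = ∑ i ∈ S, t i * c i + ∑ i ∈ Sᶜ, t i * c i :=
    (Finset.sum_add_sum_compl S _).symm
  have h1 : ∑ i ∈ S, t i * c i ≤ ∑ i ∈ S, (t i + τ * (c i - 1)) := by
    apply Finset.sum_le_sum
    intro i hi
    have := mul_le_mul_of_nonpos_right (key1 i hi) (by linarith [hc1 i] : c i - 1 ≤ 0)
    nlinarith
  have h2 : ∑ i ∈ Sᶜ, t i * c i ≤ ∑ i ∈ Sᶜ, τ * c i := by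
    apply Finset.sum_le_sum
    intro i hi
    exact mul_le_mul_of_nonneg_right (key2 i hi) (hc0 i)
  have hcard : (S.card : ℝ) = k := by rw [hS, card_filter_lt hk]
  have hsum2 : ∑ i ∈ S, c i + ∑ i ∈ Sᶜ, c i = ∑ i, c i := Finset.sum_add_sum_compl S c
  have expand : ∑ i ∈ S, (t i + τ * (c i - 1)) + ∑ i ∈ Sᶜ, τ * c i
      = ∑ i ∈ S, t i + τ * (∑ i, c i - S.card) := by
    rw [Finset.sum_add_distrib, ← Finset.mul_sum, ← Finset.mul_sum,
      Finset.sum_sub_distrib, Finset.sum_const, nsmul_eq_mul, mul_one]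
    ring_nf
    rw [← hsum2]
    ring
  have hneg : τ * (∑ i, c i - S.card) ≤ 0 := by
    apply mul_nonpos_of_nonneg_of_nonpos hτ0
    rw [hcard]; linarith
  linarith [h1, h2, hsplit, expand]

lemma dot_mulVec_sum_smul {n : ℕ} (vi : Fin n → ℂ) (X : Matrix (Fin n) (Fin n) ℂ)
    (c : Fin n → ℂ) (f : Fin n → (Fin n → ℂ)) :
    star vi ⬝ᵥ (X *ᵥ (∑ j, c j • f j)) = ∑ j, c j * (star vi ⬝ᵥ (X *ᵥ f j)) := by
  rw [← Matrix.mulVecLin_apply, map_sum]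
  simp only [dotProduct, Finset.sum_apply, Finset.mul_sum, Matrix.mulVecLin_apply]
  rw [Finset.sum_comm]
  congr 1
  ext j
  rw [Matrix.mulVec_smul]
  simp only [Pi.smul_apply, smul_eq_mul]
  congr 1
  ext x
  ring

lemma key {n k : ℕ} (hk : k ≤ n) (X : Matrix (Fin n) (Fin n) ℂ)
    (v w : Fin k → Fin n → ℂ) (hv : ONSys v) (hw : ONSys w) :
    (∑ i, star (v i) ⬝ᵥ (X *ᵥ w i)).re ≤ kyFan k X := by
  classical
  have hH := Matrix.isHermitian_conjTranspose_mul_self X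
  set μ : Fin n → ℝ := hH.eigenvalues with hμdef
  set b := hH.eigenvectorBasis with hbdef
  set bf : Fin n → (Fin n → ℂ) := fun j => ⇑(b j) with hbf
  have hμ0 : ∀ j, 0 ≤ μ j := fun j =>
    (Matrix.posSemidef_conjTranspose_mul_self X).eigenvalues_nonneg j
  have hmv : ∀ j, (Xᴴ * X) *ᵥ bf j = μ j • bf j := fun j => hH.mulVec_eigenvectorBasis j
  have dotXX : ∀ (y z : Fin n → ℂ), star (X *ᵥ y) ⬝ᵥ (X *ᵥ z) = star y ⬝ᵥ ((Xᴴ * X) *ᵥ z) := by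
    intro y z
    rw [Matrix.star_mulVec, ← Matrix.mulVec_mulVec]
    exact (Matrix.dotProduct_mulVec _ _ _).symm
  have dotbb : ∀ j l, star (bf j) ⬝ᵥ bf l = if j = l then 1 else 0 := by
    intro j l
    rw [← inner_toE]
    exact orthonormal_iff_ite.mp b.orthonormal j l
  have dotXbXb : ∀ j l, star (X *ᵥ bf j) ⬝ᵥ (X *ᵥ bf l)
      = ((μ l : ℂ)) * (if j = l then 1 else 0) := by
    intro j l
    rw [dotXX, hmv, dotProduct_smul, dotbb]
    simp [Complex.real_smul]
  have hXb0 : ∀ j, μ j = 0 → X *ᵥ bf j = 0 := by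
    intro j hj
    have h := dotXbXb j j
    rw [hj, if_pos rfl] at h
    simp only [Complex.ofReal_zero, zero_mul] at h
    have h2 : (inner ℂ (toE (X *ᵥ bf j)) (toE (X *ᵥ bf j)) : ℂ) = 0 := by
      rw [inner_toE]; exact h
    have h3 := inner_self_eq_zero.mp h2
    have : toE (X *ᵥ bf j) = toE 0 := by rw [h3]; rfl
    exact (WithLp.equiv 2 _).symm.injective this
  -- coefficient sequence
  set a : Fin n → ℂ :=
    fun j => ∑ i, (star (v i) ⬝ᵥ (X *ᵥ bf j)) * ((inner ℂ (b j) (toE (w i)) : ℂ)) with ha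
  have stepA : ∑ i, star (v i) ⬝ᵥ (X *ᵥ w i) = ∑ j, a j := by
    have hper : ∀ i, star (v i) ⬝ᵥ (X *ᵥ w i)
        = ∑ j, (inner ℂ (b j) (toE (w i)) : ℂ) * (star (v i) ⬝ᵥ (X *ᵥ bf j)) := by
      intro i
      have hrepr : w i = ∑ j, (inner ℂ (b j) (toE (w i)) : ℂ) • bf j := by
        have h := b.sum_repr' (toE (w i))
        calc w i = ⇑(toE (w i)) := rfl
          _ = ⇑(∑ j, (inner ℂ (b j) (toE (w i)) : ℂ) • b j) := by rw [h]
          _ = ∑ j, (inner ℂ (b j) (toE (w i)) : ℂ) • bf j := by simp [bf]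
      conv_lhs => rw [hrepr]
      exact dot_mulVec_sum_smul _ _ _ _
    rw [Finset.sum_congr rfl (fun i _ => hper i), Finset.sum_comm]
    apply Finset.sum_congr rfl
    intro j _
    rw [ha]
    apply Finset.sum_congr rfl
    intro i _
    ring
  -- p and q
  set p : Fin n → ℝ := fun j => ∑ i, ‖(inner ℂ (toE (v i)) (toE (X *ᵥ bf j)) : ℂ)‖ ^ 2 with hp
  set q : Fin n → ℝ := fun j => ∑ i, ‖(inner ℂ (b j) (toE (w i)) : ℂ)‖ ^ 2 with hq
  have hp0 : ∀ j, 0 ≤ p j := fun j => Finset.sum_nonneg fun i _ => sq_nonneg _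
  have hq0 : ∀ j, 0 ≤ q j := fun j => Finset.sum_nonneg fun i _ => sq_nonneg _
  have hnormXb : ∀ j, ‖toE (X *ᵥ bf j)‖ ^ 2 = μ j := by
    intro j
    have h := dotXbXb j j
    rw [if_pos rfl, mul_one] at h
    rw [← inner_toE] at h
    have := @inner_self_eq_norm_sq ℂ _ _ _ _ (toE (X *ᵥ bf j))
    rw [← this, h]
    simp
  have hple : ∀ j, p j ≤ μ j := by
    intro j
    calc p j ≤ ‖toE (X *ᵥ bf j)‖ ^ 2 := (onsys_orthonormal hv).sum_inner_products_le _
      _ = μ j := hnormXb j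
  have hqle : ∀ j, q j ≤ 1 := by
    intro j
    have h := (onsys_orthonormal hw).sum_inner_products_le (s := Finset.univ) (x := b j)
    have hb1 : ‖b j‖ = 1 := b.orthonormal.1 j
    rw [hb1, one_pow] at h
    calc q j = ∑ i, ‖(inner ℂ (toE (w i)) (b j) : ℂ)‖ ^ 2 := by
          apply Finset.sum_congr rfl; intro i _; rw [norm_inner_symm]
      _ ≤ 1 := h
  have hqsum : ∑ j, q j ≤ (k : ℝ) := by
    rw [hq, Finset.sum_comm]
    calc ∑ i : Fin k, ∑ j : Fin n, ‖(inner ℂ (b j) (toE (w i)) : ℂ)‖ ^ 2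
        ≤ ∑ _i : Fin k, (1 : ℝ) := by
          apply Finset.sum_le_sum
          intro i _
          have h := b.orthonormal.sum_inner_products_le (s := Finset.univ) (x := toE (w i))
          have h1 : ‖toE (w i)‖ = 1 := onsys_norm_eq_one hw i
          rw [h1, one_pow] at h
          exact h
      _ = (k : ℝ) := by simp
  -- normalized left singular vectors
  set S : Finset (Fin n) := Finset.univ.filter (fun j => μ j ≠ 0) with hSdef
  set xv : Fin n → EuclideanSpace ℂ (Fin n) :=
    fun j => ((Real.sqrt (μ j))⁻¹ : ℂ) • toE (X *ᵥ bf j) with hxv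
  have hxinner : ∀ j l, (inner ℂ (xv j) (xv l) : ℂ)
      = ((Real.sqrt (μ j))⁻¹ : ℂ) * ((Real.sqrt (μ l))⁻¹ : ℂ)
        * ((μ l : ℂ) * if j = l then 1 else 0) := by
    intro j l
    rw [hxv]
    rw [inner_smul_left, inner_smul_right, inner_toE, dotXbXb]
    simp only [map_inv₀, Complex.conj_ofReal]
    ring
  have hxon : Orthonormal ℂ (fun j : {j : Fin n // μ j ≠ 0} => xv j) := by
    rw [orthonormal_iff_ite]
    rintro ⟨j, hj⟩ ⟨l, hl⟩
    rw [hxinner]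
    by_cases hjl : j = l
    · subst hjl
      rw [if_pos rfl, if_pos rfl, mul_one]
      have hμpos : 0 < μ j := lt_of_le_of_ne (hμ0 j) (Ne.symm hj)
      have hs : Real.sqrt (μ j) * Real.sqrt (μ j) = μ j := Real.mul_self_sqrt (hμ0 j)
      have hsne : Real.sqrt (μ j) ≠ 0 := ne_of_gt (Real.sqrt_pos.mpr hμpos)
      have hsC : ((Real.sqrt (μ j) : ℂ)) * (Real.sqrt (μ j) : ℂ) = (μ j : ℂ) := by
        exact_mod_cast congrArg (Complex.ofReal) hs
      have hsCne : ((Real.sqrt (μ j) : ℂ)) ≠ 0 := by exact_mod_cast hsne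
      rw [← hsC]
      field_simp
    · rw [if_neg hjl, if_neg (by simp [Subtype.ext_iff]; exact hjl)]
      ring
  have hpsum : ∑ j ∈ S, p j / μ j ≤ (k : ℝ) := by
    have hterm : ∀ j ∈ S, p j / μ j = ∑ i, ‖(inner ℂ (xv j) (toE (v i)) : ℂ)‖ ^ 2 := by
      intro j hj
      rw [hSdef, Finset.mem_filter] at hj
      have hμpos : 0 < μ j := lt_of_le_of_ne (hμ0 j) (Ne.symm hj.2)
      rw [hp, Finset.sum_div]
      apply Finset.sum_congr rfl
      intro i _
      rw [hxv]
      rw [inner_smul_left]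
      rw [norm_mul, norm_inner_symm]
      rw [map_inv₀, Complex.conj_ofReal, norm_inv, Complex.norm_real,
        Real.norm_eq_abs, abs_of_nonneg (Real.sqrt_nonneg _)]
      rw [mul_pow, inv_pow, Real.sq_sqrt (hμ0 j)]
      rw [div_eq_mul_inv, mul_comm]
    rw [Finset.sum_congr rfl hterm, Finset.sum_comm]
    calc ∑ i : Fin k, ∑ j ∈ S, ‖(inner ℂ (xv j) (toE (v i)) : ℂ)‖ ^ 2
        ≤ ∑ _i : Fin k, (1 : ℝ) := by
          apply Finset.sum_le_sum
          intro i _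
          have h := hxon.sum_inner_products_le (s := Finset.univ) (x := toE (v i))
          have h1 : ‖toE (v i)‖ = 1 := onsys_norm_eq_one hv i
          rw [h1, one_pow] at h
          have hsub : ∑ j ∈ S, ‖(inner ℂ (xv j) (toE (v i)) : ℂ)‖ ^ 2
              = ∑ j : {j : Fin n // μ j ≠ 0}, ‖(inner ℂ (xv j) (toE (v i)) : ℂ)‖ ^ 2 := by
            rw [← Finset.sum_subtype S (by intro x; rw [hSdef]; simp)
              (fun j => ‖(inner ℂ (xv j) (toE (v i)) : ℂ)‖ ^ 2)]
          rw [hsub]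
          exact h
      _ = (k : ℝ) := by simp
  -- the coefficient bound
  set c : Fin n → ℝ := fun j => if μ j = 0 then 0 else ‖a j‖ / Real.sqrt (μ j) with hc
  have hc0 : ∀ j, 0 ≤ c j := by
    intro j; simp only [hc]
    split
    · exact le_refl 0
    · positivity
  have hAeq : ∀ j, ‖a j‖ = Real.sqrt (μ j) * c j := by
    intro j; simp only [hc]
    split
    · rename_i hμj
      have : a j = 0 := by
        rw [ha]
        apply Finset.sum_eq_zero
        intro i _
        rw [hXb0 j hμj]
        simp
      rw [this]; simp
    · rename_i hμj
      have hμpos : 0 < μ j := lt_of_le_of_ne (hμ0 j) (Ne.symm hμj)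
      have hsne : Real.sqrt (μ j) ≠ 0 := ne_of_gt (Real.sqrt_pos.mpr hμpos)
      field_simp
  have hacs : ∀ j, ‖a j‖ ≤ Real.sqrt (p j) * Real.sqrt (q j) := by
    intro j
    have h := cs_sum (fun i => star (v i) ⬝ᵥ (X *ᵥ bf j))
      (fun i => (inner ℂ (b j) (toE (w i)) : ℂ))
    rw [ha]
    convert h using 4 with i
    rw [inner_toE]
  have hc1 : ∀ j, c j ≤ 1 := by
    intro j; simp only [hc]
    split
    · norm_num
    · rename_i hμj
      have hμpos : 0 < μ j := lt_of_le_of_ne (hμ0 j) (Ne.symm hμj)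
      have hspos : 0 < Real.sqrt (μ j) := Real.sqrt_pos.mpr hμpos
      rw [div_le_one hspos]
      calc ‖a j‖ ≤ Real.sqrt (p j) * Real.sqrt (q j) := hacs j
        _ ≤ Real.sqrt (μ j) * 1 := by
            apply mul_le_mul (Real.sqrt_le_sqrt (hple j))
              (Real.sqrt_le_one.mpr (hqle j)) (Real.sqrt_nonneg _) (Real.sqrt_nonneg _)
        _ = Real.sqrt (μ j) := mul_one _
  have hcle : ∀ j, μ j ≠ 0 → c j ≤ (p j / μ j + q j) / 2 := by
    intro j hμj
    simp only [hc]; rw [if_neg hμj]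
    have hμpos : 0 < μ j := lt_of_le_of_ne (hμ0 j) (Ne.symm hμj)
    have hspos : 0 < Real.sqrt (μ j) := Real.sqrt_pos.mpr hμpos
    have h1 : ‖a j‖ / Real.sqrt (μ j) ≤ Real.sqrt (p j / μ j) * Real.sqrt (q j) := by
      rw [div_le_iff₀ hspos, Real.sqrt_div (hp0 j)]
      have heq : Real.sqrt (p j) / Real.sqrt (μ j) * Real.sqrt (q j) * Real.sqrt (μ j)
          = Real.sqrt (p j) * Real.sqrt (q j) := by field_simp
      rw [heq]
      exact hacs j
    calc ‖a j‖ / Real.sqrt (μ j) ≤ Real.sqrt (p j / μ j) * Real.sqrt (q j) := h1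
      _ ≤ (p j / μ j + q j) / 2 := by
          nlinarith [sq_nonneg (Real.sqrt (p j / μ j) - Real.sqrt (q j)),
            Real.sq_sqrt (by positivity : (0:ℝ) ≤ p j / μ j),
            Real.sq_sqrt (hq0 j), Real.sqrt_nonneg (p j / μ j), Real.sqrt_nonneg (q j)]
  have hcsum : ∑ j, c j ≤ (k : ℝ) := by
    have hzero : ∀ j ∈ Finset.univ, j ∉ S → c j = 0 := by
      intro j _ hj
      rw [hSdef, Finset.mem_filter] at hj
      push_neg at hj
      have : μ j = 0 := by
        by_contra hne
        exact hne (hj (Finset.mem_univ j))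
      simp only [hc]; rw [if_pos this]
    rw [← Finset.sum_subset (Finset.subset_univ S) hzero]
    have hqS : ∑ j ∈ S, q j ≤ (k : ℝ) :=
      le_trans (Finset.sum_le_sum_of_subset_of_nonneg (Finset.subset_univ S)
        (fun j _ _ => hq0 j)) hqsum
    calc ∑ j ∈ S, c j ≤ ∑ j ∈ S, (p j / μ j + q j) / 2 := by
          apply Finset.sum_le_sum
          intro j hj
          rw [hSdef, Finset.mem_filter] at hj
          exact hcle j hj.2
      _ = (∑ j ∈ S, p j / μ j + ∑ j ∈ S, q j) / 2 := by
          rw [← Finset.sum_add_distrib, ← Finset.sum_div]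
      _ ≤ ((k : ℝ) + (k : ℝ)) / 2 := by
          have := add_le_add hpsum hqS
          linarith
      _ = (k : ℝ) := by ring
  -- conclusion
  have main1 : (∑ i, star (v i) ⬝ᵥ (X *ᵥ w i)).re ≤ ∑ j, Real.sqrt (μ j) * c j := by
    rw [stepA, Complex.re_sum]
    calc ∑ j, (a j).re ≤ ∑ j, ‖a j‖ := by
          apply Finset.sum_le_sum
          intro j _
          exact Complex.re_le_norm _
      _ = ∑ j, Real.sqrt (μ j) * c j := Finset.sum_congr rfl (fun j _ => hAeq j)
  set σ : Equiv.Perm (Fin n) := Tuple.sort μ with hσ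
  set e : Equiv.Perm (Fin n) := Fin.revPerm.trans σ with he
  have hsv : ∀ i : Fin n, svalues X i = Real.sqrt (μ (e i)) := fun i => rfl
  have tA : Antitone (fun i : Fin n => Real.sqrt (μ (e i))) := by
    intro i j hij
    apply Real.sqrt_le_sqrt
    exact Tuple.monotone_sort μ (Fin.rev_le_rev.mpr hij)
  have hfinal := sorted_sum_le hk (fun i => Real.sqrt (μ (e i))) (fun i => c (e i)) tA
    (fun i => Real.sqrt_nonneg _) (fun i => hc0 _) (fun i => hc1 _)
    (by rw [Equiv.sum_comp e c]; exact hcsum)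
  calc (∑ i, star (v i) ⬝ᵥ (X *ᵥ w i)).re ≤ ∑ j, Real.sqrt (μ j) * c j := main1
    _ = ∑ i, Real.sqrt (μ (e i)) * c (e i) :=
        (Equiv.sum_comp e (fun j => Real.sqrt (μ j) * c j)).symm
    _ ≤ ∑ i ∈ Finset.univ.filter (fun i : Fin n => (i : ℕ) < k), Real.sqrt (μ (e i)) := hfinal
    _ = kyFan k X := by
        rw [kyFan]
        exact Finset.sum_congr rfl (fun i _ => (hsv i).symm)

end KF

namespace KF

lemma dotU {n : ℕ} (U M : Matrix (Fin n) (Fin n) ℂ) (x y : Fin n → ℂ) :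
    star (U *ᵥ x) ⬝ᵥ (M *ᵥ y) = star x ⬝ᵥ ((Uᴴ * M) *ᵥ y) := by
  rw [Matrix.star_mulVec, ← Matrix.mulVec_mulVec]
  exact (Matrix.dotProduct_mulVec _ _ _).symm

lemma filter_eq_map {n k : ℕ} (hk : k ≤ n) :
    Finset.univ.filter (fun i : Fin n => (i : ℕ) < k)
      = (Finset.univ : Finset (Fin k)).map (Fin.castLEEmb hk) := by
  ext i
  simp only [Finset.mem_filter, Finset.mem_univ, true_and, Finset.mem_map,
    Fin.castLEEmb_apply]
  constructor
  · intro h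
    exact ⟨⟨i, h⟩, rfl⟩
  · rintro ⟨j, -, rfl⟩
    simpa using j.isLt

lemma sum_filter_eq {n k : ℕ} (hk : k ≤ n) (f : Fin n → ℝ) :
    ∑ i ∈ Finset.univ.filter (fun i : Fin n => (i : ℕ) < k), f i
      = ∑ i : Fin k, f (Fin.castLE hk i) := by
  rw [filter_eq_map hk, Finset.sum_map]
  rfl

end KF

noncomputable def eigDesc {n : ℕ} (A : Matrix (Fin n) (Fin n) ℂ) (hA : A.IsHermitian) :
    Fin n → ℝ :=
  (hA.eigenvalues ∘ Tuple.sort hA.eigenvalues) ∘ Fin.rev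

theorem stmt0 {n k : ℕ} (hk : k ≤ n)
    (A B U P : Matrix (Fin n) (Fin n) ℂ)
    (hU : U ∈ Matrix.unitaryGroup (Fin n) ℂ)
    (hP : P.PosSemidef) (hP2 : P * P = Aᴴ * A) (hA : A = U * P)
    (u : Fin k → Fin n → ℂ) (hon : ONSys u)
    (heig : ∀ i : Fin k, P *ᵥ u i = (svalues A (Fin.castLE hk i) : ℂ) • u i)
    (hsum : ∑ i, star (u i) ⬝ᵥ ((Uᴴ * B) *ᵥ u i) = 0) :
    ∀ c : ℂ, kyFan k A ≤ kyFan k (A + c • B) := by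
  intro c
  have hUU : Uᴴ * U = 1 := by
    have h := hU.1
    rwa [Matrix.star_eq_conjTranspose] at h
  set v : Fin k → Fin n → ℂ := fun i => U *ᵥ u i with hv
  have hvon : ONSys v := by
    intro i j
    simp only [hv]
    rw [KF.dotU, hUU, Matrix.one_mulVec]
    exact hon i j
  have hkey := KF.key hk (A + c • B) v u hvon hon
  have hAu : ∀ i, star (v i) ⬝ᵥ (A *ᵥ u i) = (svalues A (Fin.castLE hk i) : ℂ) := by
    intro i
    simp only [hv]
    have hUA : Uᴴ * A = P := by rw [hA, ← Matrix.mul_assoc, hUU, Matrix.one_mul]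
    rw [KF.dotU, hUA, heig i, dotProduct_smul, smul_eq_mul]
    have h1 : star (u i) ⬝ᵥ u i = 1 := by rw [hon i i, if_pos rfl]
    rw [h1, mul_one]
  have hBu : ∑ i, star (v i) ⬝ᵥ (B *ᵥ u i) = 0 := by
    have hper : ∀ i, star (v i) ⬝ᵥ (B *ᵥ u i) = star (u i) ⬝ᵥ ((Uᴴ * B) *ᵥ u i) := by
      intro i
      simp only [hv]
      rw [KF.dotU]
    rw [Finset.sum_congr rfl (fun i _ => hper i)]
    exact hsum
  have hsum2 : ∑ i, star (v i) ⬝ᵥ ((A + c • B) *ᵥ u i)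
      = ∑ i, (svalues A (Fin.castLE hk i) : ℂ) := by
    have hper : ∀ i, star (v i) ⬝ᵥ ((A + c • B) *ᵥ u i)
        = star (v i) ⬝ᵥ (A *ᵥ u i) + c * (star (v i) ⬝ᵥ (B *ᵥ u i)) := by
      intro i
      rw [Matrix.add_mulVec, dotProduct_add]
      congr 1
      rw [Matrix.smul_mulVec, dotProduct_smul, smul_eq_mul]
    rw [Finset.sum_congr rfl (fun i _ => hper i), Finset.sum_add_distrib,
      ← Finset.mul_sum, hBu, mul_zero, add_zero]
    exact Finset.sum_congr rfl (fun i _ => hAu i)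
  have hkA : kyFan k A = (∑ i, star (v i) ⬝ᵥ ((A + c • B) *ᵥ u i)).re := by
    rw [hsum2, Complex.re_sum]
    simp only [Complex.ofReal_re]
    rw [kyFan, KF.sum_filter_eq hk]
  rw [hkA]
  exact hkey
end

section
/- Let X, Y ∈ M_n(ℂ) with Y positive semidefinite having eigenvalues λ_1(Y) ≥ ... ≥ λ_n(Y) ≥ 0, and let 1 ≤ r ≤ n. Then the set W(X,Y) = {∑_{i=1}^r ⟨u_i, Xu_i⟩ : u_1,...,u_r orthonormal, Yu_i = λ_i(Y)u_i for all 1 ≤ i ≤ r} is a convex subset of ℂ. -/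
open Matrix BigOperators
open scoped ComplexOrder

section Aux


variable {n : ℕ}

lemma dot_conj (x y : Fin n → ℂ) : star y ⬝ᵥ x = (starRingEnd ℂ) (star x ⬝ᵥ y) := by
  simp [dotProduct, map_sum, mul_comm]

lemma dotv_expand (a b a' b' : ℂ) (x y x' y' : Fin n → ℂ) :
    star (a • x + b • y) ⬝ᵥ (a' • x' + b' • y') =
      (starRingEnd ℂ) a * a' * (star x ⬝ᵥ x') + (starRingEnd ℂ) a * b' * (star x ⬝ᵥ y')
      + (starRingEnd ℂ) b * a' * (star y ⬝ᵥ x') + (starRingEnd ℂ) b * b' * (star y ⬝ᵥ y') := by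
  simp [star_add, star_smul, add_dotProduct, smul_dotProduct, dotProduct_add, dotProduct_smul,
    smul_eq_mul]
  ring

lemma dot2_expand (M : Matrix (Fin n) (Fin n) ℂ) (a b a' b' : ℂ) (x y x' y' : Fin n → ℂ) :
    star (a • x + b • y) ⬝ᵥ (M *ᵥ (a' • x' + b' • y')) =
      (starRingEnd ℂ) a * a' * (star x ⬝ᵥ (M *ᵥ x')) + (starRingEnd ℂ) a * b' * (star x ⬝ᵥ (M *ᵥ y'))
      + (starRingEnd ℂ) b * a' * (star y ⬝ᵥ (M *ᵥ x')) + (starRingEnd ℂ) b * b' * (star y ⬝ᵥ (M *ᵥ y')) := by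
  rw [Matrix.mulVec_add, Matrix.mulVec_smul, Matrix.mulVec_smul]
  exact dotv_expand a b a' b' x y (M *ᵥ x') (M *ᵥ y')

lemma dot_self_re (w : Fin n → ℂ) : star w ⬝ᵥ w = ((∑ i, Complex.normSq (w i) : ℝ) : ℂ) := by
  simp [dotProduct, Complex.normSq_eq_conj_mul_self]

/-- Halmos' Toeplitz–Hausdorff segment construction. -/
lemma halmos (X : Matrix (Fin n) (Fin n) ℂ) (x y : Fin n → ℂ)
    (hx : star x ⬝ᵥ x = 1) (hy : star y ⬝ᵥ y = 1) (a b : ℝ)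
    (ha : 0 ≤ a) (hb : 0 ≤ b) (hab : a + b = 1) :
    ∃ α β : ℂ,
      star (α • x + β • y) ⬝ᵥ (α • x + β • y) = 1 ∧
      star (α • x + β • y) ⬝ᵥ (X *ᵥ (α • x + β • y)) =
        (a : ℂ) * (star x ⬝ᵥ (X *ᵥ x)) + (b : ℂ) * (star y ⬝ᵥ (X *ᵥ y)) := by
  by_cases hAB : star x ⬝ᵥ (X *ᵥ x) = star y ⬝ᵥ (X *ᵥ y)
  · refine ⟨1, 0, ?_, ?_⟩
    · simp [hx]
    · have h1 : (1:ℂ) • x + (0:ℂ) • y = x := by simp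
      rw [h1, hAB]
      have h2 : ((a:ℂ) + (b:ℂ)) = 1 := by
        rw [← Complex.ofReal_add, hab, Complex.ofReal_one]
      calc star y ⬝ᵥ (X *ᵥ y) = ((a:ℂ)+(b:ℂ)) * (star y ⬝ᵥ (X *ᵥ y)) := by rw [h2, one_mul]
        _ = _ := by ring
  · -- main case
    set A : ℂ := star x ⬝ᵥ (X *ᵥ x) with hA
    set Bv : ℂ := star y ⬝ᵥ (X *ᵥ y) with hBv
    set D : ℂ := Bv - A with hDdef
    have hD : D ≠ 0 := sub_ne_zero.mpr (Ne.symm hAB)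
    set dxy : ℂ := star x ⬝ᵥ y with hdxy
    have hdyx : star y ⬝ᵥ x = (starRingEnd ℂ) dxy := dot_conj x y
    set p' : ℂ := (star x ⬝ᵥ (X *ᵥ y) - A * dxy) / D with hp'
    set q0' : ℂ := (star y ⬝ᵥ (X *ᵥ x) - A * (starRingEnd ℂ) dxy) / D with hq0'
    set m : ℂ := p' - (starRingEnd ℂ) q0' with hm
    set c : ℂ := if m = 0 then 1 else m / (‖m‖ : ℂ) with hc
    have hc1 : (starRingEnd ℂ) c * c = 1 := by
      have h1 : (starRingEnd ℂ) c * c = (Complex.normSq c : ℂ) := by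
        rw [mul_comm, Complex.mul_conj]
      rw [h1]
      norm_cast
      rw [hc]
      split_ifs with h
      · simp
      · have hmabs : (‖m‖ : ℝ) ≠ 0 := norm_ne_zero_iff.mpr h
        rw [Complex.normSq_div, Complex.normSq_ofReal, Complex.normSq_eq_norm_sq, sq]
        exact div_self (mul_ne_zero hmabs hmabs)
    have hc2 : ((starRingEnd ℂ) c * p' + c * q0').im = 0 := by
      rw [hc]
      split_ifs with h
      · have hpq : p' = (starRingEnd ℂ) q0' := by
          have := sub_eq_zero.mp h
          exact this
        have h2 : (starRingEnd ℂ) (1:ℂ) * p' + 1 * q0' = (starRingEnd ℂ) q0' + q0' := by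
          rw [hpq]; simp
        rw [h2, Complex.add_im, Complex.conj_im]
        ring
      · have habs : ((‖m‖ : ℂ)) ≠ 0 := by
          simp [norm_ne_zero_iff.mpr h]
        have key : ((starRingEnd ℂ) m * p' + m * q0').im = 0 := by
          have hcm : (starRingEnd ℂ) m = (starRingEnd ℂ) p' - q0' := by
            rw [hm, map_sub, Complex.conj_conj]
          have hexp : (starRingEnd ℂ) m * p' + m * q0'
              = (starRingEnd ℂ) p' * p' - (starRingEnd ℂ) q0' * q0' := by
            rw [hcm, hm]; ring
          rw [hexp]
          simp [Complex.sub_im, Complex.mul_im, Complex.conj_re, Complex.conj_im]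
          ring
        have : (starRingEnd ℂ) (m / (‖m‖ : ℂ)) * p' + (m / (‖m‖ : ℂ)) * q0'
            = ((starRingEnd ℂ) m * p' + m * q0') / (‖m‖ : ℂ) := by
          rw [map_div₀, Complex.conj_ofReal]
          ring
        rw [this, Complex.div_im]
        simp [key, Complex.ofReal_im]
    set ρ : ℝ := ((starRingEnd ℂ) c * p' + c * q0').re with hρdef
    have hρ : (starRingEnd ℂ) c * p' + c * q0' = (ρ : ℂ) := by
      apply Complex.ext
      · simp [hρdef]
      · simp [hc2]
    set γ : ℝ := ((starRingEnd ℂ) c * dxy).re with hγdef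
    have hγ : (starRingEnd ℂ) c * dxy + c * ((starRingEnd ℂ) dxy) = ((2*γ : ℝ) : ℂ) := by
      have h3 : c * (starRingEnd ℂ) dxy = (starRingEnd ℂ) ((starRingEnd ℂ) c * dxy) := by
        rw [_root_.map_mul, Complex.conj_conj]
      rw [h3]
      exact Complex.add_conj _
    have hcrossq : (starRingEnd ℂ) c * (star x ⬝ᵥ (X *ᵥ y)) + c * (star y ⬝ᵥ (X *ᵥ x))
        = (ρ:ℂ) * D + A * ((2*γ:ℝ):ℂ) := by
      have e1 : star x ⬝ᵥ (X *ᵥ y) = p' * D + A * dxy := by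
        rw [hp']; field_simp; ring
      have e2 : star y ⬝ᵥ (X *ᵥ x) = q0' * D + A * (starRingEnd ℂ) dxy := by
        rw [hq0']; field_simp; ring
      rw [e1, e2]
      calc (starRingEnd ℂ) c * (p' * D + A * dxy) + c * (q0' * D + A * (starRingEnd ℂ) dxy)
          = ((starRingEnd ℂ) c * p' + c * q0') * D
            + A * ((starRingEnd ℂ) c * dxy + c * (starRingEnd ℂ) dxy) := by ring
        _ = _ := by rw [hρ, hγ]
    set Nval : ℝ → ℝ := fun s => (1-s)^2 + s^2 + 2*s*(1-s)*γ with hNval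
    set Eval : ℝ → ℝ := fun s => s^2 + s*(1-s)*ρ with hEval
    set uvec : ℝ → (Fin n → ℂ) := fun s => (((1-s:ℝ):ℂ) * c) • x + ((s:ℝ):ℂ) • y with huvec
    have Edot : ∀ s : ℝ, star (uvec s) ⬝ᵥ (uvec s) = ((Nval s : ℝ) : ℂ) := by
      intro s
      rw [huvec]
      simp only []
      rw [dotv_expand, hx, hy, ← hdxy, hdyx]
      have expand : (starRingEnd ℂ) (((1-s:ℝ):ℂ) * c) * (((1-s:ℝ):ℂ) * c) * 1
          + (starRingEnd ℂ) (((1-s:ℝ):ℂ) * c) * ((s:ℝ):ℂ) * dxy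
          + (starRingEnd ℂ) ((s:ℝ):ℂ) * (((1-s:ℝ):ℂ) * c) * ((starRingEnd ℂ) dxy)
          + (starRingEnd ℂ) ((s:ℝ):ℂ) * ((s:ℝ):ℂ) * 1
          = ((1-s:ℝ):ℂ)^2 * ((starRingEnd ℂ) c * c) + ((s:ℝ):ℂ)^2
            + ((s:ℝ):ℂ) * ((1-s:ℝ):ℂ) * ((starRingEnd ℂ) c * dxy + c * (starRingEnd ℂ) dxy) := by
        simp only [_root_.map_mul, Complex.conj_ofReal]
        ring
      rw [expand, hc1, hγ, hNval]
      push_cast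
      ring
    have EdotX : ∀ s : ℝ, star (uvec s) ⬝ᵥ (X *ᵥ uvec s)
        = ((Nval s : ℝ):ℂ) * A + ((Eval s : ℝ):ℂ) * D := by
      intro s
      rw [huvec]
      simp only []
      rw [dot2_expand, ← hA, ← hBv]
      have expand : (starRingEnd ℂ) (((1-s:ℝ):ℂ) * c) * (((1-s:ℝ):ℂ) * c) * A
          + (starRingEnd ℂ) (((1-s:ℝ):ℂ) * c) * ((s:ℝ):ℂ) * (star x ⬝ᵥ (X *ᵥ y))
          + (starRingEnd ℂ) ((s:ℝ):ℂ) * (((1-s:ℝ):ℂ) * c) * (star y ⬝ᵥ (X *ᵥ x))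
          + (starRingEnd ℂ) ((s:ℝ):ℂ) * ((s:ℝ):ℂ) * Bv
          = ((1-s:ℝ):ℂ)^2 * ((starRingEnd ℂ) c * c) * A + ((s:ℝ):ℂ)^2 * Bv
            + ((s:ℝ):ℂ) * ((1-s:ℝ):ℂ)
              * ((starRingEnd ℂ) c * (star x ⬝ᵥ (X *ᵥ y)) + c * (star y ⬝ᵥ (X *ᵥ x))) := by
        simp only [_root_.map_mul, Complex.conj_ofReal]
        ring
      rw [expand, hc1, hcrossq]
      have hBD : Bv = A + D := by rw [hDdef]; ring
      rw [hBD, hNval, hEval]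
      push_cast
      ring
    have hupos : ∀ s ∈ Set.Icc (0:ℝ) 1, 0 < Nval s := by
      intro s hs
      have hNr : Nval s = ∑ i, Complex.normSq (uvec s i) := by
        have h4 := Edot s
        rw [dot_self_re] at h4
        exact Complex.ofReal_inj.mp h4.symm
      have hnonneg : 0 ≤ Nval s := by
        rw [hNr]
        exact Finset.sum_nonneg (fun i _ => Complex.normSq_nonneg _)
      refine lt_of_le_of_ne hnonneg (fun h0 => ?_)
      have hu0 : uvec s = 0 := by
        have hsum : ∑ i, Complex.normSq (uvec s i) = 0 := by rw [← hNr, ← h0]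
        funext i
        exact Complex.normSq_eq_zero.mp
          ((Finset.sum_eq_zero_iff_of_nonneg (fun i _ => Complex.normSq_nonneg _)).mp hsum i
            (Finset.mem_univ i))
      rcases eq_or_ne s 0 with hs0 | hs0
      · have hxz : c • x = 0 := by
          have h5 : (((1-s:ℝ):ℂ) * c) • x + ((s:ℝ):ℂ) • y = 0 := hu0
          rw [hs0] at h5
          simpa using h5
        have hcne : c ≠ 0 := by
          intro h
          rw [h, mul_zero] at hc1
          exact one_ne_zero hc1.symm
        have hx0 : x = 0 := by
          rcases smul_eq_zero.mp hxz with h | h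
          · exact absurd h hcne
          · exact h
        rw [hx0] at hx
        simp at hx
      · have hspos : ((s:ℝ):ℂ) ≠ 0 := Complex.ofReal_ne_zero.mpr hs0
        set κ : ℂ := -((((1-s:ℝ):ℂ) * c) / ((s:ℝ):ℂ)) with hκdef
        have hyx : y = κ • x := by
          have h1 : ((s:ℝ):ℂ) • y = -((((1-s:ℝ):ℂ) * c) • x) := by
            rw [eq_neg_iff_add_eq_zero, add_comm]
            exact hu0
          have h2 : y = (((s:ℝ):ℂ))⁻¹ • (((s:ℝ):ℂ) • y) := by
            rw [smul_smul, inv_mul_cancel₀ hspos, one_smul]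
          rw [h2, h1, hκdef]
          rw [smul_neg, smul_smul]
          rw [neg_smul]
          congr 1
          rw [div_eq_inv_mul]
        have hκ1 : (starRingEnd ℂ) κ * κ = 1 := by
          have h6 := hy
          rw [hyx] at h6
          rw [star_smul, smul_dotProduct, dotProduct_smul, hx] at h6
          simpa [smul_eq_mul, mul_assoc] using h6
        have hBA : Bv = A := by
          rw [hBv, hyx, Matrix.mulVec_smul, star_smul, smul_dotProduct, dotProduct_smul]
          simp only [smul_eq_mul, Complex.star_def]
          rw [← mul_assoc, hκ1, one_mul]
        exact hD (by rw [hDdef, hBA, sub_self])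
    set F : ℝ → ℝ := fun s => Eval s / Nval s with hFdef
    have hcont : ContinuousOn F (Set.Icc 0 1) := by
      apply ContinuousOn.div
      · apply Continuous.continuousOn
        rw [hEval]; fun_prop
      · apply Continuous.continuousOn
        rw [hNval]; fun_prop
      · exact fun s hs => (hupos s hs).ne'
    have hF0 : F 0 = 0 := by simp [hFdef, hEval]
    have hF1 : F 1 = 1 := by norm_num [hFdef, hEval, hNval]
    have hbmem : b ∈ Set.Icc (F 0) (F 1) := by
      rw [hF0, hF1]
      exact ⟨hb, by linarith⟩
    obtain ⟨s, hsmem, hFs⟩ := intermediate_value_Icc zero_le_one hcont hbmem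
    have hNpos : 0 < Nval s := hupos s hsmem
    set σ : ℝ := (Real.sqrt (Nval s))⁻¹ with hσdef
    have hσ2 : σ^2 * Nval s = 1 := by
      rw [hσdef, inv_pow, Real.sq_sqrt hNpos.le]
      exact inv_mul_cancel₀ hNpos.ne'
    have hσ2C : ((σ:ℝ):ℂ) * ((σ:ℝ):ℂ) * ((Nval s:ℝ):ℂ) = 1 := by
      have h7 : ((σ * σ * Nval s : ℝ) : ℂ) = ((1:ℝ):ℂ) := by
        rw [show σ * σ * Nval s = σ^2 * Nval s from by ring, hσ2]
      push_cast at h7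
      exact h7
    refine ⟨(σ:ℂ) * (((1-s:ℝ):ℂ) * c), (σ:ℂ) * ((s:ℝ):ℂ), ?_, ?_⟩
    · have hw : ((σ:ℂ) * (((1-s:ℝ):ℂ) * c)) • x + ((σ:ℂ) * ((s:ℝ):ℂ)) • y = (σ:ℂ) • uvec s := by
        rw [huvec]
        simp only [smul_add, smul_smul]
      rw [hw, star_smul, smul_dotProduct, dotProduct_smul, Edot s]
      simp only [smul_eq_mul, Complex.star_def, Complex.conj_ofReal]
      linear_combination hσ2C
    · have hw : ((σ:ℂ) * (((1-s:ℝ):ℂ) * c)) • x + ((σ:ℂ) * ((s:ℝ):ℂ)) • y = (σ:ℂ) • uvec s := by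
        rw [huvec]
        simp only [smul_add, smul_smul]
      rw [hw, Matrix.mulVec_smul, star_smul, smul_dotProduct, dotProduct_smul, EdotX s]
      simp only [smul_eq_mul, Complex.star_def, Complex.conj_ofReal]
      have hEb : Eval s = b * Nval s := by
        have h8 : Eval s / Nval s = b := hFs
        field_simp at h8
        linarith [h8]
      have haℂ : (a:ℂ) = 1 - (b:ℂ) := by
        have h9 : a = 1 - b := by linarith
        rw [h9]; push_cast; ring
      rw [hEb, hDdef, haℂ]
      push_cast
      linear_combination (A + (b:ℂ) * (Bv - A)) * hσ2C


lemma star_sum_dot {m : ℕ} (cc : Fin m → ℂ) (f : Fin m → Fin n → ℂ) (z : Fin n → ℂ) :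
    star (∑ a, cc a • f a) ⬝ᵥ z = ∑ a, (starRingEnd ℂ) (cc a) * (star (f a) ⬝ᵥ z) := by
  simp only [dotProduct, Pi.star_apply, Finset.sum_apply, Pi.smul_apply, smul_eq_mul,
    star_sum, star_mul', Finset.sum_mul, Finset.mul_sum]
  rw [Finset.sum_comm]
  refine Finset.sum_congr rfl fun a _ => Finset.sum_congr rfl fun i _ => ?_
  simp only [starRingEnd_apply]
  ring

lemma dot_sum_right {m : ℕ} (z : Fin n → ℂ) (cc : Fin m → ℂ) (f : Fin m → Fin n → ℂ) :
    star z ⬝ᵥ (∑ a, cc a • f a) = ∑ a, cc a * (star z ⬝ᵥ f a) := by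
  simp only [dotProduct, Pi.star_apply, Finset.sum_apply, Pi.smul_apply, smul_eq_mul,
    Finset.mul_sum]
  rw [Finset.sum_comm]
  refine Finset.sum_congr rfl fun a _ => Finset.sum_congr rfl fun i _ => ?_
  ring

lemma mulVec_sum' {m : ℕ} (X : Matrix (Fin n) (Fin n) ℂ) (cc : Fin m → ℂ)
    (f : Fin m → Fin n → ℂ) :
    X *ᵥ (∑ a, cc a • f a) = ∑ a, cc a • (X *ᵥ f a) := by
  have h : X *ᵥ (∑ a, cc a • f a) = X.mulVecLin (∑ a, cc a • f a) := rfl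
  rw [h, map_sum]
  refine Finset.sum_congr rfl fun a _ => ?_
  rw [show X.mulVecLin (cc a • f a) = X *ᵥ (cc a • f a) from rfl, Matrix.mulVec_smul]

lemma key_dot {m : ℕ} (P Q : Matrix (Fin m) (Fin m) ℂ) (f g : Fin m → Fin n → ℂ) (p q : Fin m) :
    star (∑ a, P a p • f a) ⬝ᵥ (∑ b, Q b q • g b)
      = ∑ a, ∑ b, (starRingEnd ℂ) (P a p) * Q b q * (star (f a) ⬝ᵥ g b) := by
  rw [star_sum_dot]
  refine Finset.sum_congr rfl fun a _ => ?_
  rw [dot_sum_right, Finset.mul_sum]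
  refine Finset.sum_congr rfl fun b _ => ?_
  ring

lemma key_dotX {m : ℕ} (X : Matrix (Fin n) (Fin n) ℂ) (P Q : Matrix (Fin m) (Fin m) ℂ)
    (f g : Fin m → Fin n → ℂ) (p q : Fin m) :
    star (∑ a, P a p • f a) ⬝ᵥ (X *ᵥ ∑ b, Q b q • g b)
      = ∑ a, ∑ b, (starRingEnd ℂ) (P a p) * Q b q * (star (f a) ⬝ᵥ (X *ᵥ g b)) := by
  rw [mulVec_sum']
  exact key_dot P Q f (fun b => X *ᵥ g b) p q

local notation "⟪" x ", " y "⟫" => @inner ℂ _ _ x y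

lemma svd_offdiag {k : ℕ} (B : Matrix (Fin k) (Fin k) ℂ) :
    ∃ M N : Matrix (Fin k) (Fin k) ℂ, Mᴴ * M = 1 ∧ Nᴴ * N = 1 ∧
      ∀ i j, i ≠ j → (Mᴴ * B * N) i j = 0 := by
  classical
  have hC : (Bᴴ * B).IsHermitian := isHermitian_conjTranspose_mul_self B
  set N : Matrix (Fin k) (Fin k) ℂ := (hC.eigenvectorUnitary : Matrix (Fin k) (Fin k) ℂ)
    with hNdef
  have hNu : Nᴴ * N = 1 := by
    rw [← Matrix.star_eq_conjTranspose]
    exact mem_unitaryGroup_iff'.mp hC.eigenvectorUnitary.2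
  have hNu' : N * Nᴴ = 1 := by
    rw [← Matrix.star_eq_conjTranspose]
    exact mem_unitaryGroup_iff.mp hC.eigenvectorUnitary.2
  have hst : Bᴴ * B = N * diagonal (RCLike.ofReal ∘ hC.eigenvalues) * Nᴴ := by
    have h0 := hC.spectral_theorem
    rw [Unitary.conjStarAlgAut_apply, Matrix.star_eq_conjTranspose] at h0
    exact h0
  have hdiag : Nᴴ * (Bᴴ * B) * N = diagonal (RCLike.ofReal ∘ hC.eigenvalues) := by
    conv_lhs => rw [hst]
    calc Nᴴ * (N * diagonal (RCLike.ofReal ∘ hC.eigenvalues) * Nᴴ) * N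
        = (Nᴴ * N) * diagonal (RCLike.ofReal ∘ hC.eigenvalues) * (Nᴴ * N) := by
          simp only [Matrix.mul_assoc]
      _ = diagonal (RCLike.ofReal ∘ hC.eigenvalues) := by rw [hNu]; simp
  set c : Fin k → EuclideanSpace ℂ (Fin k) := fun j => WithLp.toLp 2 (fun i => (B * N) i j) with hcdef
  have horth : ∀ i j, i ≠ j → ⟪c i, c j⟫ = 0 := by
    intro i j hij
    have h1 : ⟪c i, c j⟫ = ((B * N)ᴴ * (B * N)) i j := by
      rw [PiLp.inner_apply, Matrix.mul_apply]
      apply Finset.sum_congr rfl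
      intro l _
      rw [Matrix.conjTranspose_apply]
      simp [hcdef, RCLike.inner_apply, mul_comm]
    have h2 : (B * N)ᴴ * (B * N) = Nᴴ * (Bᴴ * B) * N := by
      rw [Matrix.conjTranspose_mul]
      simp only [Matrix.mul_assoc]
    rw [h1, h2, hdiag, Matrix.diagonal_apply_ne _ hij]
  set s : Set (Fin k) := {j | c j ≠ 0} with hsdef
  set v : Fin k → EuclideanSpace ℂ (Fin k) := fun j => ((‖c j‖ : ℂ))⁻¹ • c j with hvdef
  have hv : Orthonormal ℂ (s.restrict v) := by
    rw [orthonormal_iff_ite]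
    rintro ⟨i, hi⟩ ⟨j, hj⟩
    by_cases hij : (⟨i, hi⟩ : s) = ⟨j, hj⟩
    · rw [if_pos hij]
      obtain rfl : i = j := by injection hij
      simp only [Set.restrict_apply, hvdef, Set.restrict]
      rw [inner_smul_left, inner_smul_right, inner_self_eq_norm_sq_to_K, map_inv₀, Complex.conj_ofReal]
      have hne : (‖c i‖ : ℂ) ≠ 0 := by
        simp only [ne_eq, Complex.ofReal_eq_zero, norm_eq_zero]
        exact hi
      field_simp
      rfl
    · rw [if_neg hij]
      have hijne : i ≠ j := by
        intro h; exact hij (Subtype.ext h)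
      simp only [Set.restrict_apply, hvdef, Set.restrict]
      rw [inner_smul_left, inner_smul_right, horth i j hijne]
      ring
  have hcard : Module.finrank ℂ (EuclideanSpace ℂ (Fin k)) = Fintype.card (Fin k) := by
    simp
  obtain ⟨bb, hbb⟩ := hv.exists_orthonormalBasis_extension_of_card_eq hcard
  refine ⟨Matrix.of (fun i j => bb j i), N, ?_, hNu, ?_⟩
  · ext i j
    rw [Matrix.mul_apply, Matrix.one_apply]
    have := orthonormal_iff_ite.mp bb.orthonormal i j
    rw [PiLp.inner_apply] at this
    simp only [RCLike.inner_apply'] at this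
    rw [← this]
    apply Finset.sum_congr rfl
    intro l _
    rw [Matrix.conjTranspose_apply]
    rfl
  · intro i j hij
    have h2 : (Matrix.of (fun i j => bb j i))ᴴ * B * N
        = (Matrix.of (fun i j => bb j i))ᴴ * (B * N) := Matrix.mul_assoc _ _ _
    rw [h2, Matrix.mul_apply]
    by_cases hcj : c j = 0
    · apply Finset.sum_eq_zero
      intro l _
      have : (B * N) l j = 0 := by
        have := congrArg (fun w : EuclideanSpace ℂ (Fin k) => w l) hcj
        simpa [hcdef] using this
      rw [this, mul_zero]
    · have hjs : j ∈ s := hcj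
      have hbj : bb j = v j := hbb j hjs
      have hcjv : c j = ((‖c j‖ : ℂ)) • bb j := by
        rw [hbj, hvdef]
        simp only [smul_smul]
        rw [mul_inv_cancel₀, one_smul]
        simp only [ne_eq, Complex.ofReal_eq_zero, norm_eq_zero]
        exact hcj
      have key : ∑ l, (Matrix.of (fun i j => bb j i))ᴴ i l * (B * N) l j
          = ⟪bb i, c j⟫ := by
        rw [PiLp.inner_apply]
        apply Finset.sum_congr rfl
        intro l _
        rw [Matrix.conjTranspose_apply]
        simp [hcdef, RCLike.inner_apply, mul_comm]
      rw [key, hcjv, inner_smul_right, orthonormal_iff_ite.mp bb.orthonormal i j,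
        if_neg hij, mul_zero]


lemma group_align (X : Matrix (Fin n) (Fin n) ℂ) (u v : Fin k → Fin n → ℂ)
    (hu : ONSys u) (hv : ONSys v) :
    ∃ x y : Fin k → Fin n → ℂ, ONSys x ∧ ONSys y ∧
      (∀ p q, p ≠ q → star (x p) ⬝ᵥ y q = 0) ∧
      (∀ p, ∃ coef : Fin k → ℂ, x p = ∑ q, coef q • u q) ∧
      (∀ p, ∃ coef : Fin k → ℂ, y p = ∑ q, coef q • v q) ∧
      ∑ p, star (x p) ⬝ᵥ (X *ᵥ x p) = ∑ p, star (u p) ⬝ᵥ (X *ᵥ u p) ∧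
      ∑ p, star (y p) ⬝ᵥ (X *ᵥ y p) = ∑ p, star (v p) ⬝ᵥ (X *ᵥ v p) := by
  classical
  set B : Matrix (Fin k) (Fin k) ℂ := Matrix.of (fun p q => star (u p) ⬝ᵥ v q) with hBdef
  obtain ⟨M, N, hM, hN, hMBN⟩ := svd_offdiag B
  have hM' : M * Mᴴ = 1 := mul_eq_one_comm.mp hM
  have hN' : N * Nᴴ = 1 := mul_eq_one_comm.mp hN
  -- generic computations
  have onsys_new : ∀ (P : Matrix (Fin k) (Fin k) ℂ), Pᴴ * P = 1 → ∀ (f : Fin k → Fin n → ℂ),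
      ONSys f → ONSys (fun p => ∑ a, P a p • f a) := by
    intro P hP f hf p q
    rw [key_dot]
    have h1 : ∀ a : Fin k, ∑ b, (starRingEnd ℂ) (P a p) * P b q * (star (f a) ⬝ᵥ f b)
        = (starRingEnd ℂ) (P a p) * P a q := by
      intro a
      rw [Finset.sum_eq_single a]
      · rw [hf a a, if_pos rfl, mul_one]
      · intro b _ hb
        rw [hf a b, if_neg (fun h => hb h.symm), mul_zero]
      · intro h; exact absurd (Finset.mem_univ a) h
    rw [Finset.sum_congr rfl (fun a _ => h1 a)]
    have h2 : ∑ a, (starRingEnd ℂ) (P a p) * P a q = (Pᴴ * P) p q := by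
      rw [Matrix.mul_apply]
      exact Finset.sum_congr rfl fun a _ => by rw [Matrix.conjTranspose_apply]; rfl
    rw [h2, hP, Matrix.one_apply]
  have sum_pres : ∀ (P : Matrix (Fin k) (Fin k) ℂ), P * Pᴴ = 1 → ∀ (f : Fin k → Fin n → ℂ),
      ∑ p, star ((fun p => ∑ a, P a p • f a) p) ⬝ᵥ (X *ᵥ (fun p => ∑ a, P a p • f a) p)
        = ∑ p, star (f p) ⬝ᵥ (X *ᵥ f p) := by
    intro P hP f
    have step1 : ∀ p, star (∑ a, P a p • f a) ⬝ᵥ (X *ᵥ ∑ b, P b p • f b)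
        = ∑ a, ∑ b, (starRingEnd ℂ) (P a p) * P b p * (star (f a) ⬝ᵥ (X *ᵥ f b)) :=
      fun p => key_dotX X P P f f p p
    calc ∑ p, star ((fun p => ∑ a, P a p • f a) p) ⬝ᵥ (X *ᵥ (fun p => ∑ a, P a p • f a) p)
        = ∑ p, ∑ a, ∑ b, (starRingEnd ℂ) (P a p) * P b p * (star (f a) ⬝ᵥ (X *ᵥ f b)) := by
          exact Finset.sum_congr rfl fun p _ => step1 p
      _ = ∑ a, ∑ b, (∑ p, (starRingEnd ℂ) (P a p) * P b p) * (star (f a) ⬝ᵥ (X *ᵥ f b)) := by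
          rw [Finset.sum_comm]
          refine Finset.sum_congr rfl fun a _ => ?_
          rw [Finset.sum_comm]
          refine Finset.sum_congr rfl fun b _ => ?_
          rw [Finset.sum_mul]
      _ = ∑ a, ∑ b, ((P * Pᴴ) b a) * (star (f a) ⬝ᵥ (X *ᵥ f b)) := by
          refine Finset.sum_congr rfl fun a _ => Finset.sum_congr rfl fun b _ => ?_
          congr 1
          rw [Matrix.mul_apply]
          refine Finset.sum_congr rfl fun p _ => ?_
          rw [Matrix.conjTranspose_apply]
          simp only [starRingEnd_apply]
          ring
      _ = ∑ a, star (f a) ⬝ᵥ (X *ᵥ f a) := by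
          refine Finset.sum_congr rfl fun a _ => ?_
          rw [hP]
          rw [Finset.sum_eq_single a]
          · rw [Matrix.one_apply_eq, one_mul]
          · intro b _ hb
            rw [Matrix.one_apply_ne hb, zero_mul]
          · intro h; exact absurd (Finset.mem_univ a) h
  refine ⟨fun p => ∑ a, M a p • u a, fun p => ∑ a, N a p • v a,
    onsys_new M hM u hu, onsys_new N hN v hv, ?_,
    fun p => ⟨fun a => M a p, rfl⟩, fun p => ⟨fun a => N a p, rfl⟩,
    sum_pres M hM' u, sum_pres N hN' v⟩
  intro p q hpq
  rw [key_dot]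
  have h3 : ∑ a, ∑ b, (starRingEnd ℂ) (M a p) * N b q * (star (u a) ⬝ᵥ v b)
      = (Mᴴ * B * N) p q := by
    rw [Matrix.mul_assoc, Matrix.mul_apply]
    refine Finset.sum_congr rfl fun a _ => ?_
    rw [Matrix.conjTranspose_apply, Matrix.mul_apply, Finset.mul_sum]
    refine Finset.sum_congr rfl fun b _ => ?_
    rw [hBdef]
    simp only [Matrix.of_apply, starRingEnd_apply]
    ring
  rw [h3]
  exact hMBN p q hpq

lemma dot_zero_of_pairwise {m m' n : ℕ} (F : Fin m → Fin n → ℂ) (Gg : Fin m' → Fin n → ℂ)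
    (cf : Fin m → ℂ) (cg : Fin m' → ℂ)
    (h : ∀ a b, star (F a) ⬝ᵥ Gg b = 0) :
    star (∑ a, cf a • F a) ⬝ᵥ (∑ b, cg b • Gg b) = 0 := by
  rw [star_sum_dot]
  apply Finset.sum_eq_zero
  intro a _
  rw [dot_sum_right]
  have : ∑ b, cg b * (star (F a) ⬝ᵥ Gg b) = 0 :=
    Finset.sum_eq_zero fun b _ => by rw [h a b, mul_zero]
  rw [this, mul_zero]

lemma eig_orth {n : ℕ} (Y : Matrix (Fin n) (Fin n) ℂ) (hY : Y.IsHermitian)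
    (u v : Fin n → ℂ) (μ ν : ℝ) (hu : Y *ᵥ u = (μ:ℂ) • u) (hv : Y *ᵥ v = (ν:ℂ) • v)
    (hμν : μ ≠ ν) : star u ⬝ᵥ v = 0 := by
  have h1 : star u ⬝ᵥ (Y *ᵥ v) = (ν:ℂ) * (star u ⬝ᵥ v) := by
    rw [hv, dotProduct_smul, smul_eq_mul]
  have h3 : star u ᵥ* Y = ((μ:ℂ)) • star u := by
    have h4 : star (Y *ᵥ u) = star u ᵥ* Yᴴ := Matrix.star_mulVec Y u
    rw [hY.eq] at h4
    rw [← h4, hu, star_smul]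
    simp [Complex.conj_ofReal]
  have h2 : star u ⬝ᵥ (Y *ᵥ v) = (μ:ℂ) * (star u ⬝ᵥ v) := by
    rw [Matrix.dotProduct_mulVec, h3, smul_dotProduct, smul_eq_mul]
  have h5 : ((μ:ℂ) - (ν:ℂ)) * (star u ⬝ᵥ v) = 0 := by
    rw [sub_mul, ← h2, ← h1, sub_self]
  rcases mul_eq_zero.mp h5 with h | h
  · exact absurd (Complex.ofReal_inj.mp (sub_eq_zero.mp h)) hμν
  · exact h

set_option maxHeartbeats 2000000 in
lemma align {n r : ℕ} (X Y : Matrix (Fin n) (Fin n) ℂ) (hY : Y.IsHermitian)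
    (lam : Fin r → ℝ) (u v : Fin r → Fin n → ℂ) (hu : ONSys u) (hv : ONSys v)
    (hue : ∀ i, Y *ᵥ u i = (lam i : ℂ) • u i) (hve : ∀ i, Y *ᵥ v i = (lam i : ℂ) • v i) :
    ∃ x y : Fin r → Fin n → ℂ, ONSys x ∧ ONSys y ∧
      (∀ i, Y *ᵥ x i = (lam i : ℂ) • x i) ∧ (∀ i, Y *ᵥ y i = (lam i : ℂ) • y i) ∧
      (∀ i j, i ≠ j → star (x i) ⬝ᵥ y j = 0) ∧
      ∑ i, star (x i) ⬝ᵥ (X *ᵥ x i) = ∑ i, star (u i) ⬝ᵥ (X *ᵥ u i) ∧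
      ∑ i, star (y i) ⬝ᵥ (X *ᵥ y i) = ∑ i, star (v i) ⬝ᵥ (X *ᵥ v i) := by
  classical
  set G : ℝ → Finset (Fin r) := fun c => Finset.univ.filter (fun i => lam i = c) with hGdef
  set e : (c : ℝ) → Fin (G c).card → Fin r := fun c p => ((G c).orderIsoOfFin rfl p : Fin r)
    with hedef
  have he_mem : ∀ c p, e c p ∈ G c := fun c p => ((G c).orderIsoOfFin rfl p).2
  have he_lam : ∀ c p, lam (e c p) = c := by
    intro c p
    have := he_mem c p
    rw [hGdef] at this
    exact (Finset.mem_filter.mp this).2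
  have einj : ∀ c, Function.Injective (e c) := by
    intro c a b h
    exact ((G c).orderIsoOfFin rfl).injective (Subtype.ext h)
  have hONu : ∀ c, ONSys (fun p => u (e c p)) := by
    intro c p q
    simp only []
    rw [hu]
    by_cases h : p = q
    · rw [if_pos h, if_pos (h ▸ rfl)]
    · rw [if_neg (fun hh => h (einj c hh)), if_neg h]
  have hONv : ∀ c, ONSys (fun p => v (e c p)) := by
    intro c p q
    simp only []
    rw [hv]
    by_cases h : p = q
    · rw [if_pos h, if_pos (h ▸ rfl)]
    · rw [if_neg (fun hh => h (einj c hh)), if_neg h]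
  have H := fun c : ℝ => group_align X (fun p => u (e c p)) (fun p => v (e c p))
    (hONu c) (hONv c)
  choose xx yy hxxON hyyON hxycr hxcomb hycomb hxsum hysum using H
  set idx : (c : ℝ) → (i : Fin r) → lam i = c → Fin (G c).card := fun c i h =>
    ((G c).orderIsoOfFin rfl).symm ⟨i, by rw [hGdef]; exact Finset.mem_filter.mpr ⟨Finset.mem_univ i, h⟩⟩
    with hidxdef
  have he_idx : ∀ c i (h : lam i = c), e c (idx c i h) = i := by
    intro c i h
    have h2 := OrderIso.apply_symm_apply ((G c).orderIsoOfFin rfl)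
      (⟨i, by rw [hGdef]; exact Finset.mem_filter.mpr ⟨Finset.mem_univ i, h⟩⟩ : {x // x ∈ G c})
    exact congrArg Subtype.val h2
  have idx_inj : ∀ c i j hi hj, idx c i hi = idx c j hj → i = j := by
    intro c i j hi hj h
    have h2 := congrArg (e c) h
    rw [he_idx c i hi, he_idx c j hj] at h2
    exact h2
  have idx_e : ∀ c p, idx c (e c p) (he_lam c p) = p := by
    intro c p
    apply einj c
    rw [he_idx c (e c p) (he_lam c p)]
  have K1x : ∀ (c : ℝ) (i : Fin r) (h : lam i = c),
      xx (lam i) (idx (lam i) i rfl) = xx c (idx c i h) := by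
    intro c i h; subst h; rfl
  have K1y : ∀ (c : ℝ) (i : Fin r) (h : lam i = c),
      yy (lam i) (idx (lam i) i rfl) = yy c (idx c i h) := by
    intro c i h; subst h; rfl
  have hsum_glob : ∀ (f : Fin r → ℂ), ∑ c ∈ Finset.univ.image lam, ∑ i ∈ G c, f i = ∑ i, f i := by
    intro f
    rw [hGdef]
    exact Finset.sum_fiberwise_of_maps_to (fun i _ => Finset.mem_image_of_mem lam (Finset.mem_univ i)) f
  have hgroup : ∀ (c : ℝ) (f : Fin r → ℂ), ∑ p, f (e c p) = ∑ i ∈ G c, f i := by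
    intro c f
    rw [← Finset.sum_coe_sort (G c) f]
    exact Fintype.sum_equiv ((G c).orderIsoOfFin rfl).toEquiv _ _ (fun p => rfl)
  refine ⟨fun i => xx (lam i) (idx (lam i) i rfl), fun i => yy (lam i) (idx (lam i) i rfl),
    ?_, ?_, ?_, ?_, ?_, ?_, ?_⟩
  · -- ONSys x
    intro i j
    simp only []
    by_cases hij : lam j = lam i
    · rw [K1x (lam i) j hij, hxxON (lam i) (idx (lam i) i rfl) (idx (lam i) j hij)]
      by_cases h : i = j
      · subst h; rw [if_pos rfl, if_pos rfl]
      · rw [if_neg (fun hh => h (idx_inj (lam i) i j rfl hij hh)), if_neg h]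
    · have hijne : i ≠ j := fun h => hij (h ▸ rfl)
      rw [if_neg hijne]
      obtain ⟨cf, hcf⟩ := hxcomb (lam i) (idx (lam i) i rfl)
      obtain ⟨cg, hcg⟩ := hxcomb (lam j) (idx (lam j) j rfl)
      rw [hcf, hcg]
      apply dot_zero_of_pairwise
      intro a b
      exact eig_orth Y hY _ _ (lam i) (lam j)
        (by rw [hue (e (lam i) a), he_lam (lam i) a])
        (by rw [hue (e (lam j) b), he_lam (lam j) b])
        (fun h => hij h.symm)
  · -- ONSys y
    intro i j
    simp only []
    by_cases hij : lam j = lam i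
    · rw [K1y (lam i) j hij, hyyON (lam i) (idx (lam i) i rfl) (idx (lam i) j hij)]
      by_cases h : i = j
      · subst h; rw [if_pos rfl, if_pos rfl]
      · rw [if_neg (fun hh => h (idx_inj (lam i) i j rfl hij hh)), if_neg h]
    · have hijne : i ≠ j := fun h => hij (h ▸ rfl)
      rw [if_neg hijne]
      obtain ⟨cf, hcf⟩ := hycomb (lam i) (idx (lam i) i rfl)
      obtain ⟨cg, hcg⟩ := hycomb (lam j) (idx (lam j) j rfl)
      rw [hcf, hcg]
      apply dot_zero_of_pairwise
      intro a b
      exact eig_orth Y hY _ _ (lam i) (lam j)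
        (by rw [hve (e (lam i) a), he_lam (lam i) a])
        (by rw [hve (e (lam j) b), he_lam (lam j) b])
        (fun h => hij h.symm)
  · -- eigen x
    intro i
    simp only []
    obtain ⟨cf, hcf⟩ := hxcomb (lam i) (idx (lam i) i rfl)
    rw [hcf, mulVec_sum', Finset.smul_sum]
    refine Finset.sum_congr rfl fun q _ => ?_
    rw [hue (e (lam i) q), he_lam (lam i) q, smul_comm]
  · -- eigen y
    intro i
    simp only []
    obtain ⟨cf, hcf⟩ := hycomb (lam i) (idx (lam i) i rfl)
    rw [hcf, mulVec_sum', Finset.smul_sum]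
    refine Finset.sum_congr rfl fun q _ => ?_
    rw [hve (e (lam i) q), he_lam (lam i) q, smul_comm]
  · -- cross
    intro i j hij
    simp only []
    by_cases hlam : lam j = lam i
    · rw [K1y (lam i) j hlam]
      exact hxycr (lam i) _ _ (fun hh => hij (idx_inj (lam i) i j rfl hlam hh))
    · obtain ⟨cf, hcf⟩ := hxcomb (lam i) (idx (lam i) i rfl)
      obtain ⟨cg, hcg⟩ := hycomb (lam j) (idx (lam j) j rfl)
      rw [hcf, hcg]
      apply dot_zero_of_pairwise
      intro a b
      exact eig_orth Y hY _ _ (lam i) (lam j)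
        (by rw [hue (e (lam i) a), he_lam (lam i) a])
        (by rw [hve (e (lam j) b), he_lam (lam j) b])
        (fun h => hlam h.symm)
  · -- sum x
    rw [← hsum_glob (fun i => star (xx (lam i) (idx (lam i) i rfl)) ⬝ᵥ (X *ᵥ xx (lam i) (idx (lam i) i rfl))),
      ← hsum_glob (fun i => star (u i) ⬝ᵥ (X *ᵥ u i))]
    refine Finset.sum_congr rfl fun c _ => ?_
    calc ∑ i ∈ G c, star (xx (lam i) (idx (lam i) i rfl)) ⬝ᵥ (X *ᵥ xx (lam i) (idx (lam i) i rfl))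
        = ∑ p, star (xx c p) ⬝ᵥ (X *ᵥ xx c p) := by
          rw [← hgroup c (fun i => star (xx (lam i) (idx (lam i) i rfl)) ⬝ᵥ (X *ᵥ xx (lam i) (idx (lam i) i rfl)))]
          refine Finset.sum_congr rfl fun p _ => ?_
          rw [K1x c (e c p) (he_lam c p), idx_e c p]
      _ = ∑ p, star (u (e c p)) ⬝ᵥ (X *ᵥ u (e c p)) := hxsum c
      _ = ∑ i ∈ G c, star (u i) ⬝ᵥ (X *ᵥ u i) := hgroup c (fun i => star (u i) ⬝ᵥ (X *ᵥ u i))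
  · -- sum y
    rw [← hsum_glob (fun i => star (yy (lam i) (idx (lam i) i rfl)) ⬝ᵥ (X *ᵥ yy (lam i) (idx (lam i) i rfl))),
      ← hsum_glob (fun i => star (v i) ⬝ᵥ (X *ᵥ v i))]
    refine Finset.sum_congr rfl fun c _ => ?_
    calc ∑ i ∈ G c, star (yy (lam i) (idx (lam i) i rfl)) ⬝ᵥ (X *ᵥ yy (lam i) (idx (lam i) i rfl))
        = ∑ p, star (yy c p) ⬝ᵥ (X *ᵥ yy c p) := by
          rw [← hgroup c (fun i => star (yy (lam i) (idx (lam i) i rfl)) ⬝ᵥ (X *ᵥ yy (lam i) (idx (lam i) i rfl)))]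
          refine Finset.sum_congr rfl fun p _ => ?_
          rw [K1y c (e c p) (he_lam c p), idx_e c p]
      _ = ∑ p, star (v (e c p)) ⬝ᵥ (X *ᵥ v (e c p)) := hysum c
      _ = ∑ i ∈ G c, star (v i) ⬝ᵥ (X *ᵥ v i) := hgroup c (fun i => star (v i) ⬝ᵥ (X *ᵥ v i))


end Aux

set_option maxHeartbeats 1000000 in
theorem stmt12 {n r : ℕ} (hr1 : 1 ≤ r) (hr : r ≤ n)
    (X Y : Matrix (Fin n) (Fin n) ℂ) (hY : Y.PosSemidef) :
    Convex ℝ {z : ℂ | ∃ u : Fin r → Fin n → ℂ, ONSys u ∧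
        (∀ i : Fin r, Y *ᵥ u i = (eigDesc Y hY.isHermitian (Fin.castLE hr i) : ℂ) • u i) ∧
        z = ∑ i, star (u i) ⬝ᵥ (X *ᵥ u i)} := by
  intro z1 hz1 z2 hz2 a b ha hb hab
  obtain ⟨u, huON, hueig, hz1v⟩ := hz1
  obtain ⟨v, hvON, hveig, hz2v⟩ := hz2
  set lam : Fin r → ℝ := fun i => eigDesc Y hY.isHermitian (Fin.castLE hr i) with hlam
  obtain ⟨x, y, hxON, hyON, hxeig, hyeig, hxycross, hxsum, hysum⟩ :=
    align X Y hY.isHermitian lam u v huON hvON hueig hveig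
  choose α β hnorm hval using fun i => halmos X (x i) (y i)
    ((hxON i i).trans (if_pos rfl)) ((hyON i i).trans (if_pos rfl)) a b ha hb hab
  refine ⟨fun i => α i • x i + β i • y i, ?_, ?_, ?_⟩
  · intro i j
    by_cases h : i = j
    · subst h
      rw [if_pos rfl]
      exact hnorm i
    · rw [if_neg h]
      have h1 : star (x i) ⬝ᵥ x j = 0 := by rw [hxON i j, if_neg h]
      have h2 : star (x i) ⬝ᵥ y j = 0 := hxycross i j h
      have h3 : star (y i) ⬝ᵥ x j = 0 := by
        rw [dot_conj (x j) (y i), hxycross j i (Ne.symm h), map_zero]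
      have h4 : star (y i) ⬝ᵥ y j = 0 := by rw [hyON i j, if_neg h]
      rw [dotv_expand, h1, h2, h3, h4]
      ring
  · intro i
    simp only []
    rw [Matrix.mulVec_add, Matrix.mulVec_smul, Matrix.mulVec_smul, hxeig i, hyeig i]
    rw [smul_add, smul_smul, smul_smul, smul_smul, smul_smul,
      mul_comm (α i) ((lam i : ℂ)), mul_comm (β i) ((lam i : ℂ))]
  · rw [Finset.sum_congr rfl (fun i (_ : i ∈ Finset.univ) => hval i)]
    rw [Finset.sum_add_distrib, ← Finset.mul_sum, ← Finset.mul_sum, hxsum, hysum,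
      ← hz1v, ← hz2v, Complex.real_smul, Complex.real_smul]
end
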